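/- Let w, z be Lipschitz quaternions (quaternions with integer coordinates) and s ≥ 1. If all coordinates of wz are divisible by 2^s, then all coordinates of zw are divisible by 2^s. Equivalently, the ring ℤ_{2^t}[i,j,k] is reversible: ab = 0 implies ba = 0. -/

import Mathlib

lemma sq_aux (a : ℤ) : ((2:ℤ) ∣ a ∧ ∃ k, a^2 = 4*k) ∨ (¬ (2:ℤ) ∣ a ∧ ∃ k, a^2 = 8*k+1) := by
  rcases Int.even_or_odd a with ⟨m, hm⟩ | ⟨m, hm⟩
  · exact Or.inl ⟨⟨m, by omega⟩, m^2, by subst hm; ring⟩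
  · refine Or.inr ⟨by omega, ?_⟩
    obtain ⟨k, hk⟩ := Int.even_mul_succ_self m
    exact ⟨k, by subst hm; nlinarith⟩

lemma norm_mod8 (a b c d : ℤ) (h : ¬ ((2:ℤ) ∣ a ∧ 2 ∣ b ∧ 2 ∣ c ∧ 2 ∣ d)) :
    ¬ (8:ℤ) ∣ (a^2+b^2+c^2+d^2) ∧
    ((4:ℤ) ∣ (a^2+b^2+c^2+d^2) → ¬(2:ℤ)∣a ∧ ¬(2:ℤ)∣b ∧ ¬(2:ℤ)∣c ∧ ¬(2:ℤ)∣d) := by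
  rcases sq_aux a with ⟨ha, ka, hka⟩ | ⟨ha, ka, hka⟩ <;>
  rcases sq_aux b with ⟨hb, kb, hkb⟩ | ⟨hb, kb, hkb⟩ <;>
  rcases sq_aux c with ⟨hc, kc, hkc⟩ | ⟨hc, kc, hkc⟩ <;>
  rcases sq_aux d with ⟨hd, kd, hkd⟩ | ⟨hd, kd, hkd⟩ <;>
  rw [hka, hkb, hkc, hkd] <;> omega

lemma pow_dvd_pow_mul_odd {k e : ℕ} {u : ℤ} (hu : Odd u) (h : (2:ℤ)^k ∣ 2^e * u) : k ≤ e := by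
  by_contra hlt
  push_neg at hlt
  have h1 : (2:ℤ)^(e+1) ∣ 2^e * u := dvd_trans (pow_dvd_pow 2 (by omega)) h
  rw [pow_succ, mul_comm ((2:ℤ)^e) 2] at h1
  have h2 : (2:ℤ) ∣ u := by
    have hpe : ((2:ℤ)^e) ≠ 0 := by positivity
    rw [mul_comm ((2:ℤ)^e) u] at h1
    exact (mul_dvd_mul_iff_right hpe).mp h1
  obtain ⟨m, hm⟩ := h2; obtain ⟨nn, hn⟩ := hu; omega

lemma extract (x : ℤ) (h8 : ¬(8:ℤ)∣x) : ∃ e, e ≤ 2 ∧ ∃ u, Odd u ∧ x = 2^e * u := by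
  rcases Int.even_or_odd x with ⟨m,hm⟩|h
  · rcases Int.even_or_odd m with ⟨n,hn⟩|h'
    · rcases Int.even_or_odd n with ⟨p,hp⟩|h''
      · exact absurd ⟨p, by omega⟩ h8
      · exact ⟨2, le_refl _, n, h'', by push_cast; omega⟩
    · exact ⟨1, by omega, m, h', by push_cast; omega⟩
  · exact ⟨0, by omega, x, h, by push_cast; omega⟩

lemma val_bound (x y : ℤ) (hx : ¬(8:ℤ)∣x) (hy : ¬(8:ℤ)∣y) (k : ℕ) (hk : (2:ℤ)^k ∣ x*y) :
    k ≤ 4 ∧ (4 ≤ k → ((4:ℤ)∣x ∧ (4:ℤ)∣y)) := by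
  obtain ⟨e, he, u, hu, hxu⟩ := extract x hx
  obtain ⟨f, hf, v, hv, hyv⟩ := extract y hy
  have hxy : x*y = 2^(e+f)*(u*v) := by rw [hxu, hyv, pow_add]; ring
  have hkef : k ≤ e + f := pow_dvd_pow_mul_odd (hu.mul hv) (hxy ▸ hk)
  refine ⟨by omega, fun h4 => ?_⟩
  have he2 : e = 2 := by omega
  have hf2 : f = 2 := by omega
  subst he2 hf2
  exact ⟨⟨u, by rw [hxu]; ring⟩, ⟨v, by rw [hyv]; ring⟩⟩


lemma crux : ∀ s : ℕ, ∀ a b c d p q r t : ℤ,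
    (2:ℤ)^(s+1) ∣ (a*p - b*q - c*r - d*t) →
    (2:ℤ)^(s+1) ∣ (a*q + b*p + c*t - d*r) →
    (2:ℤ)^(s+1) ∣ (a*r - b*t + c*p + d*q) →
    (2:ℤ)^(s+1) ∣ (a*t + b*r - c*q + d*p) →
    (2:ℤ)^s ∣ (c*t - d*r) ∧ (2:ℤ)^s ∣ (d*q - b*t) ∧ (2:ℤ)^s ∣ (b*r - c*q) := by
  intro s
  induction s with
  | zero => intro a b c d p q r t _ _ _ _; simp
  | succ s ih =>
    intro a b c d p q r t h1 h2 h3 h4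
    have twopow : ∀ X : ℤ, (2:ℤ)^(s+2) ∣ 2*X → (2:ℤ)^(s+1) ∣ X := by
      intro X hX
      have h2 : (2:ℤ)*2^(s+1) ∣ 2*X := by rwa [show (2:ℤ)*2^(s+1) = 2^(s+2) by ring]
      exact (mul_dvd_mul_iff_left (by norm_num : (2:ℤ) ≠ 0)).mp h2
    have doub : ∀ X : ℤ, (2:ℤ)^s ∣ X → (2:ℤ)^(s+1) ∣ 2*X := by
      intro X ⟨k, hk⟩
      exact ⟨k, by rw [hk]; ring⟩
    by_cases hw : (2:ℤ)∣a ∧ 2∣b ∧ 2∣c ∧ 2∣d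
    · obtain ⟨⟨a',ha⟩,⟨b',hb⟩,⟨c',hc⟩,⟨d',hd⟩⟩ := hw
      subst ha hb hc hd
      obtain ⟨C1, C2, C3⟩ := ih a' b' c' d' p q r t
        (twopow _ (by convert h1 using 1; ring)) (twopow _ (by convert h2 using 1; ring))
        (twopow _ (by convert h3 using 1; ring)) (twopow _ (by convert h4 using 1; ring))
      exact ⟨by convert doub _ C1 using 1; ring, by convert doub _ C2 using 1; ring,
             by convert doub _ C3 using 1; ring⟩
    · by_cases hz : (2:ℤ)∣p ∧ 2∣q ∧ 2∣r ∧ 2∣t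
      · obtain ⟨⟨p',hp⟩,⟨q',hq⟩,⟨r',hr⟩,⟨t',ht⟩⟩ := hz
        subst hp hq hr ht
        obtain ⟨C1, C2, C3⟩ := ih a b c d p' q' r' t'
          (twopow _ (by convert h1 using 1; ring)) (twopow _ (by convert h2 using 1; ring))
          (twopow _ (by convert h3 using 1; ring)) (twopow _ (by convert h4 using 1; ring))
        exact ⟨by convert doub _ C1 using 1; ring, by convert doub _ C2 using 1; ring,
               by convert doub _ C3 using 1; ring⟩
      · have hN : (a^2+b^2+c^2+d^2)*(p^2+q^2+r^2+t^2) =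
            (a*p - b*q - c*r - d*t)^2 + (a*q + b*p + c*t - d*r)^2 +
            (a*r - b*t + c*p + d*q)^2 + (a*t + b*r - c*q + d*p)^2 := by ring
        have sqd : ∀ X : ℤ, (2:ℤ)^(s+2) ∣ X → (2:ℤ)^(2*s+4) ∣ X^2 := by
          intro X hX
          have := mul_dvd_mul hX hX
          rw [← pow_add] at this
          have h2s : 2*s+4 = s+2+(s+2) := by omega
          rw [h2s, sq]; exact this
        have hdvd : (2:ℤ)^(2*s+4) ∣ (a^2+b^2+c^2+d^2)*(p^2+q^2+r^2+t^2) := by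
          rw [hN]
          exact dvd_add (dvd_add (dvd_add (sqd _ h1) (sqd _ h2)) (sqd _ h3)) (sqd _ h4)
        obtain ⟨h8w, h4w⟩ := norm_mod8 a b c d hw
        obtain ⟨h8z, h4z⟩ := norm_mod8 p q r t hz
        obtain ⟨hle, h44⟩ := val_bound _ _ h8w h8z _ hdvd
        have hs : s = 0 := by omega
        subst hs
        obtain ⟨h4x, h4y⟩ := h44 (by omega)
        obtain ⟨oa, ob, oc, od⟩ := h4w h4x
        obtain ⟨op, oq, or', ot⟩ := h4z h4y
        have odd_of : ∀ x:ℤ, ¬(2:ℤ)∣x → Odd x := fun x hx => Int.odd_iff.mpr (by omega)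
        have key : ∀ x y u v : ℤ, Odd x → Odd y → Odd u → Odd v → (2:ℤ)^1 ∣ (x*y - u*v) := by
          intro x y u v hx hy hu hv
          rw [pow_one]
          obtain ⟨m, hm⟩ := hx.mul hy
          obtain ⟨n, hn⟩ := hu.mul hv
          exact ⟨m - n, by omega⟩
        exact ⟨key _ _ _ _ (odd_of c oc) (odd_of t ot) (odd_of d od) (odd_of r or'),
               key _ _ _ _ (odd_of d od) (odd_of q oq) (odd_of b ob) (odd_of t ot),
               key _ _ _ _ (odd_of b ob) (odd_of r or') (odd_of c oc) (odd_of q oq)⟩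


lemma part1 : ∀ (w z : Quaternion ℤ) (s : ℕ), 1 ≤ s →
      ((2 ^ s : ℤ) ∣ (w * z).re ∧ (2 ^ s : ℤ) ∣ (w * z).imI ∧
        (2 ^ s : ℤ) ∣ (w * z).imJ ∧ (2 ^ s : ℤ) ∣ (w * z).imK) →
      ((2 ^ s : ℤ) ∣ (z * w).re ∧ (2 ^ s : ℤ) ∣ (z * w).imI ∧
        (2 ^ s : ℤ) ∣ (z * w).imJ ∧ (2 ^ s : ℤ) ∣ (z * w).imK) := by
  intro w z s hs ⟨H1, H2, H3, H4⟩
  obtain ⟨s', rfl⟩ : ∃ s', s = s' + 1 := ⟨s - 1, by omega⟩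
  rw [Quaternion.re_mul] at H1
  rw [Quaternion.imI_mul] at H2
  rw [Quaternion.imJ_mul] at H3
  rw [Quaternion.imK_mul] at H4
  obtain ⟨C1, C2, C3⟩ := crux s' w.re w.imI w.imJ w.imK z.re z.imI z.imJ z.imK H1 H2 H3 H4
  have doub : ∀ X : ℤ, (2:ℤ)^s' ∣ X → (2:ℤ)^(s'+1) ∣ 2*X := by
    intro X ⟨k, hk⟩; exact ⟨k, by rw [hk]; ring⟩
  refine ⟨?_, ?_, ?_, ?_⟩
  · rw [Quaternion.re_mul]; convert H1 using 1; ring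
  · rw [Quaternion.imI_mul]
    have : (2:ℤ)^(s'+1) ∣ _ := dvd_sub H2 (doub _ C1)
    convert this using 1; ring
  · rw [Quaternion.imJ_mul]
    have : (2:ℤ)^(s'+1) ∣ _ := dvd_sub H3 (doub _ C2)
    convert this using 1; ring
  · rw [Quaternion.imK_mul]
    have : (2:ℤ)^(s'+1) ∣ _ := dvd_sub H4 (doub _ C3)
    convert this using 1; ring


lemma part2 : ∀ t : ℕ, 1 ≤ t → ∀ a b : Quaternion (ZMod (2 ^ t)), a * b = 0 → b * a = 0 := by
  intro t ht a b h
  haveI : NeZero (2 ^ t) := ⟨by positivity⟩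
  set W : Quaternion ℤ := ⟨(a.re.val : ℤ), (a.imI.val : ℤ), (a.imJ.val : ℤ), (a.imK.val : ℤ)⟩ with hW
  set Z : Quaternion ℤ := ⟨(b.re.val : ℤ), (b.imI.val : ℤ), (b.imJ.val : ℤ), (b.imK.val : ℤ)⟩ with hZ
  have cast_coord : ∀ x : ZMod (2^t), (((x.val : ℤ) : ZMod (2^t))) = x := by
    intro x
    push_cast
    exact ZMod.natCast_rightInverse x
  have hdvd : ∀ X : ℤ, ((X : ZMod (2^t)) = 0) ↔ (2:ℤ)^t ∣ X := by
    intro X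
    rw [ZMod.intCast_zmod_eq_zero_iff_dvd]
    norm_num
  -- forward: coordinates of W*Z divisible
  have hWZ : (2:ℤ)^t ∣ (W*Z).re ∧ (2:ℤ)^t ∣ (W*Z).imI ∧ (2:ℤ)^t ∣ (W*Z).imJ ∧ (2:ℤ)^t ∣ (W*Z).imK := by
    refine ⟨(hdvd _).mp ?_, (hdvd _).mp ?_, (hdvd _).mp ?_, (hdvd _).mp ?_⟩
    · have : (((W*Z).re : ℤ) : ZMod (2^t)) = (a*b).re := by
        rw [Quaternion.re_mul, Quaternion.re_mul]
        push_cast [hW, hZ, cast_coord]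
        ring
      rw [this, h]; rfl
    · have : (((W*Z).imI : ℤ) : ZMod (2^t)) = (a*b).imI := by
        rw [Quaternion.imI_mul, Quaternion.imI_mul]
        push_cast [hW, hZ, cast_coord]
        ring
      rw [this, h]; rfl
    · have : (((W*Z).imJ : ℤ) : ZMod (2^t)) = (a*b).imJ := by
        rw [Quaternion.imJ_mul, Quaternion.imJ_mul]
        push_cast [hW, hZ, cast_coord]
        ring
      rw [this, h]; rfl
    · have : (((W*Z).imK : ℤ) : ZMod (2^t)) = (a*b).imK := by
        rw [Quaternion.imK_mul, Quaternion.imK_mul]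
        push_cast [hW, hZ, cast_coord]
        ring
      rw [this, h]; rfl
  obtain ⟨D1, D2, D3, D4⟩ := part1 W Z t ht hWZ
  have e1 : (((Z*W).re : ℤ) : ZMod (2^t)) = (b*a).re := by
    rw [Quaternion.re_mul, Quaternion.re_mul]; push_cast [hW, hZ, cast_coord]; ring
  have e2 : (((Z*W).imI : ℤ) : ZMod (2^t)) = (b*a).imI := by
    rw [Quaternion.imI_mul, Quaternion.imI_mul]; push_cast [hW, hZ, cast_coord]; ring
  have e3 : (((Z*W).imJ : ℤ) : ZMod (2^t)) = (b*a).imJ := by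
    rw [Quaternion.imJ_mul, Quaternion.imJ_mul]; push_cast [hW, hZ, cast_coord]; ring
  have e4 : (((Z*W).imK : ℤ) : ZMod (2^t)) = (b*a).imK := by
    rw [Quaternion.imK_mul, Quaternion.imK_mul]; push_cast [hW, hZ, cast_coord]; ring
  ext
  · rw [← e1, (hdvd _).mpr D1]; rfl
  · rw [← e2, (hdvd _).mpr D2]; rfl
  · rw [← e3, (hdvd _).mpr D3]; rfl
  · rw [← e4, (hdvd _).mpr D4]; rfl

/-- If all coordinates of the product wz of Lipschitz quaternions are divisible by 2^s
(s ≥ 1), then so are all coordinates of zw. Equivalently, ℤ_{2^t}[i,j,k] is reversible: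
ab = 0 implies ba = 0. -/
theorem lipschitz_reversible :
    (∀ (w z : Quaternion ℤ) (s : ℕ), 1 ≤ s →
      ((2 ^ s : ℤ) ∣ (w * z).re ∧ (2 ^ s : ℤ) ∣ (w * z).imI ∧
        (2 ^ s : ℤ) ∣ (w * z).imJ ∧ (2 ^ s : ℤ) ∣ (w * z).imK) →
      ((2 ^ s : ℤ) ∣ (z * w).re ∧ (2 ^ s : ℤ) ∣ (z * w).imI ∧
        (2 ^ s : ℤ) ∣ (z * w).imJ ∧ (2 ^ s : ℤ) ∣ (z * w).imK)) ∧
    (∀ t : ℕ, 1 ≤ t → ∀ a b : Quaternion (ZMod (2 ^ t)), a * b = 0 → b * a = 0) := by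
  exact ⟨part1, part2⟩
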